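/- Let c be the real Banach space of convergent sequences with the sup norm, and let X = {(x, y, z) ∈ c ⊕_∞ c ⊕_∞ c : lim x + lim y + lim z = 0}. Then for every boundary C ⊆ S_{X*} of B_{X*}, there exist x* ∈ C and an extreme point x** of B_{X**} such that |x**(x*)| < 1. -/

import Mathlib

open Filter Topology Metric
open scoped ENNReal

set_option maxHeartbeats 1000000
set_option synthInstance.maxHeartbeats 1000000

/-- The ambient space of `c ⊕_∞ c ⊕_∞ c`: triples of bounded real sequences with the
`ℓ_∞`-sum of the sup norms, `‖(x,y,z)‖ = max (‖x‖, ‖y‖, ‖z‖)`. -/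
noncomputable abbrev BddSeqTriple : Type :=
  (lp (fun _ : ℕ => ℝ) ∞) × (lp (fun _ : ℕ => ℝ) ∞) × (lp (fun _ : ℕ => ℝ) ∞)

/-- The space `X = {(x,y,z) ∈ c ⊕_∞ c ⊕_∞ c : lim x + lim y + lim z = 0}`: the subspace of
triples of *convergent* sequences whose limits add up to `0`, inside the sup-normed space of
triples of bounded sequences (so it carries exactly the norm of `c ⊕_∞ c ⊕_∞ c`). -/
noncomputable def limSumZeroSubspace : Submodule ℝ BddSeqTriple where
  carrier := {p | ∃ a b c : ℝ, Filter.Tendsto (⇑p.1) Filter.atTop (nhds a) ∧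
    Filter.Tendsto (⇑p.2.1) Filter.atTop (nhds b) ∧
    Filter.Tendsto (⇑p.2.2) Filter.atTop (nhds c) ∧ a + b + c = 0}
  add_mem' := by
    rintro p q ⟨a, b, c, ha, hb, hc, habc⟩ ⟨a', b', c', ha', hb', hc', habc'⟩
    refine ⟨a + a', b + b', c + c', ?_, ?_, ?_, by linarith⟩
    · exact (ha.add ha').congr fun n => by simp [lp.coeFn_add]
    · exact (hb.add hb').congr fun n => by simp [lp.coeFn_add]
    · exact (hc.add hc').congr fun n => by simp [lp.coeFn_add]
  zero_mem' := ⟨0, 0, 0,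
    by simp only [Prod.fst_zero, lp.coeFn_zero]; exact tendsto_const_nhds,
    by simp only [Prod.snd_zero, Prod.fst_zero, lp.coeFn_zero]; exact tendsto_const_nhds,
    by simp only [Prod.snd_zero, lp.coeFn_zero]; exact tendsto_const_nhds, by ring⟩
  smul_mem' := by
    rintro r p ⟨a, b, c, ha, hb, hc, habc⟩
    refine ⟨r * a, r * b, r * c, ?_, ?_, ?_, by rw [← mul_add, ← mul_add, habc, mul_zero]⟩
    · exact (ha.const_mul r).congr fun n => by simp [lp.coeFn_smul]
    · exact (hb.const_mul r).congr fun n => by simp [lp.coeFn_smul]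
    · exact (hc.const_mul r).congr fun n => by simp [lp.coeFn_smul]

/-- The dual space `X*` of `X`, as a type (with its canonical dual norm). -/
noncomputable def XDual : Type := StrongDual ℝ ↥limSumZeroSubspace

noncomputable instance : NormedAddCommGroup XDual :=
  inferInstanceAs (NormedAddCommGroup (StrongDual ℝ ↥limSumZeroSubspace))

noncomputable instance : NormedSpace ℝ XDual :=
  inferInstanceAs (NormedSpace ℝ (StrongDual ℝ ↥limSumZeroSubspace))

/-- An element of `X*`, viewed as a continuous linear functional on `X`. -/
def XDual.toFunctional (f : XDual) : ↥limSumZeroSubspace →L[ℝ] ℝ := f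

noncomputable section AuxiliaryDefs

def seqOf (v : ℕ → ℝ) (C : ℝ) (h : ∀ n, |v n| ≤ C) : lp (fun _ : ℕ => ℝ) ∞ :=
  ⟨v, memℓp_infty ⟨C, by rintro x ⟨n, rfl⟩; simpa [Real.norm_eq_abs] using h n⟩⟩


abbrev Xsp := ↥limSumZeroSubspace

def mkX (x y z : lp (fun _ : ℕ => ℝ) ∞) (a b c : ℝ)
    (hx : Tendsto (⇑x) atTop (nhds a)) (hy : Tendsto (⇑y) atTop (nhds b))
    (hz : Tendsto (⇑z) atTop (nhds c)) (h : a + b + c = 0) : Xsp :=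
  ⟨(x, y, z), ⟨a, b, c, hx, hy, hz, h⟩⟩

lemma norm_X (p : Xsp) : ‖p‖ = ‖p.val‖ := rfl

lemma norm_X_le (p : Xsp) (C : ℝ) (hC : 0 ≤ C)
    (h1 : ∀ n, |p.val.1 n| ≤ C) (h2 : ∀ n, |p.val.2.1 n| ≤ C)
    (h3 : ∀ n, |p.val.2.2 n| ≤ C) : ‖p‖ ≤ C := by
  rw [norm_X, Prod.norm_def]
  refine max_le (lp.norm_le_of_forall_le hC fun n => by
    simpa [Real.norm_eq_abs] using h1 n) ?_
  rw [Prod.norm_def]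
  exact max_le (lp.norm_le_of_forall_le hC fun n => by
      simpa [Real.norm_eq_abs] using h2 n)
    (lp.norm_le_of_forall_le hC fun n => by simpa [Real.norm_eq_abs] using h3 n)

lemma coord1_le (p : Xsp) (n : ℕ) : |p.val.1 n| ≤ ‖p‖ := by
  have h := lp.norm_apply_le_norm (p := (∞ : ℝ≥0∞)) (by simp) p.val.1 n
  rw [Real.norm_eq_abs] at h
  exact h.trans ((norm_fst_le p.val).trans_eq (norm_X p).symm)

lemma coord2_le (p : Xsp) (n : ℕ) : |p.val.2.1 n| ≤ ‖p‖ := by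
  have h := lp.norm_apply_le_norm (p := (∞ : ℝ≥0∞)) (by simp) p.val.2.1 n
  rw [Real.norm_eq_abs] at h
  exact h.trans (((norm_fst_le p.val.2).trans (norm_snd_le p.val)).trans_eq (norm_X p).symm)

lemma coord3_le (p : Xsp) (n : ℕ) : |p.val.2.2 n| ≤ ‖p‖ := by
  have h := lp.norm_apply_le_norm (p := (∞ : ℝ≥0∞)) (by simp) p.val.2.2 n
  rw [Real.norm_eq_abs] at h
  exact h.trans (((norm_snd_le p.val.2).trans (norm_snd_le p.val)).trans_eq (norm_X p).symm)

lemma abs_lim_le {v : ℕ → ℝ} {l C : ℝ} (hv : Tendsto v atTop (nhds l))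
    (h : ∀ n, |v n| ≤ C) : |l| ≤ C :=
  le_of_tendsto hv.abs (Filter.Eventually.of_forall h)


def uSeq : lp (fun _ : ℕ => ℝ) ∞ :=
  seqOf (fun n => 1 - 1/(n+1)) 1 (by
    intro n
    have h1 : 0 < (n:ℝ) + 1 := by positivity
    have h2 : 1/((n:ℝ)+1) ≤ 1 := by rw [div_le_one h1]; linarith
    have h3 : 0 < 1/((n:ℝ)+1) := by positivity
    rw [abs_le]; constructor <;> nlinarith)

@[simp] lemma uSeq_apply (n : ℕ) : uSeq n = 1 - 1/((n:ℝ)+1) := rfl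

lemma uSeq_tendsto : Tendsto (⇑uSeq) atTop (nhds 1) := by
  have := tendsto_one_div_add_atTop_nhds_zero_nat (𝕜 := ℝ)
  have h2 := (tendsto_const_nhds (x := (1:ℝ)) (f := (atTop : Filter ℕ))).sub this
  rw [show ⇑uSeq = fun n : ℕ => (1:ℝ) - 1/((n:ℝ)+1) from rfl]
  simpa using h2

lemma uSeq_nonneg (n : ℕ) : 0 ≤ uSeq n := by
  have h1 : 0 < (n:ℝ) + 1 := by positivity
  have h2 : 1/((n:ℝ)+1) ≤ 1 := by rw [div_le_one h1]; linarith
  simpa using h2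

lemma uSeq_le_one (n : ℕ) : uSeq n ≤ 1 := by
  have h3 : 0 < 1/((n:ℝ)+1) := by positivity
  simp only [uSeq_apply]; linarith

lemma uSeq_head (N n : ℕ) (h : n < N) : uSeq n ≤ 1 - 1/((N:ℝ)+1) := by
  simp only [uSeq_apply]
  have h1 : (n:ℝ) + 1 ≤ (N:ℝ) + 1 := by
    have : (n:ℝ) ≤ N := by exact_mod_cast h.le
    linarith
  have h2 : 0 < (n:ℝ) + 1 := by positivity
  have := one_div_le_one_div_of_le h2 h1
  linarith

def x₀ : Xsp := mkX uSeq (-uSeq) 0 1 (-1) 0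
  uSeq_tendsto
  (by rw [lp.coeFn_neg]; exact uSeq_tendsto.neg)
  (by rw [lp.coeFn_zero]; exact tendsto_const_nhds) (by ring)

lemma constSeq_tendsto (r : ℝ) :
    Tendsto (⇑(seqOf (fun _ => r) |r| (fun _ => le_refl _))) atTop (nhds r) :=
  tendsto_const_nhds

def constS (r : ℝ) : lp (fun _ : ℕ => ℝ) ∞ := seqOf (fun _ => r) |r| (fun _ => le_refl _)

@[simp] lemma constS_apply (r n) : constS r n = r := rfl

def eX : Xsp := mkX (constS 1) 0 (constS (-1)) 1 0 (-1)
  (constSeq_tendsto 1)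
  (by rw [lp.coeFn_zero]; exact tendsto_const_nhds)
  (constSeq_tendsto (-1)) (by ring)

def wit2 : Xsp := mkX 0 (constS 1) (constS (-1)) 0 1 (-1)
  (by rw [lp.coeFn_zero]; exact tendsto_const_nhds)
  (constSeq_tendsto 1)
  (constSeq_tendsto (-1)) (by ring)

-- coordinates of linear combinations
lemma comb_c1 (a b : Xsp) (s : ℝ) (n : ℕ) :
    ((a + s • b) : Xsp).val.1 n = a.val.1 n + s * b.val.1 n := by
  simp [Submodule.coe_add, Submodule.coe_smul, Prod.fst_add, Prod.smul_fst,
    lp.coeFn_add, lp.coeFn_smul, Pi.add_apply, Pi.smul_apply, smul_eq_mul]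
  rfl

lemma comb_c2 (a b : Xsp) (s : ℝ) (n : ℕ) :
    ((a + s • b) : Xsp).val.2.1 n = a.val.2.1 n + s * b.val.2.1 n := by
  simp [Submodule.coe_add, Submodule.coe_smul, Prod.snd_add, Prod.smul_snd,
    Prod.fst_add, Prod.smul_fst, lp.coeFn_add, lp.coeFn_smul, Pi.add_apply,
    Pi.smul_apply, smul_eq_mul]
  rfl

lemma comb_c3 (a b : Xsp) (s : ℝ) (n : ℕ) :
    ((a + s • b) : Xsp).val.2.2 n = a.val.2.2 n + s * b.val.2.2 n := by
  simp [Submodule.coe_add, Submodule.coe_smul, Prod.snd_add, Prod.smul_snd,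
    lp.coeFn_add, lp.coeFn_smul, Pi.add_apply, Pi.smul_apply, smul_eq_mul]
  rfl

@[simp] lemma x₀_c1 (n : ℕ) : x₀.val.1 n = uSeq n := rfl
@[simp] lemma x₀_c2 (n : ℕ) : x₀.val.2.1 n = -uSeq n := by
  show (-uSeq) n = -uSeq n
  rw [lp.coeFn_neg]; rfl
@[simp] lemma x₀_c3 (n : ℕ) : x₀.val.2.2 n = 0 := by
  show (0 : lp (fun _ : ℕ => ℝ) ∞) n = 0
  rw [lp.coeFn_zero]; rfl

lemma norm_x₀ : ‖x₀‖ = 1 := by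
  refine le_antisymm (norm_X_le x₀ 1 one_pos.le ?_ ?_ ?_) ?_
  · intro n; rw [x₀_c1, abs_le]; exact ⟨by nlinarith [uSeq_nonneg n], uSeq_le_one n⟩
  · intro n; rw [x₀_c2, abs_neg, abs_le]
    exact ⟨by nlinarith [uSeq_nonneg n], uSeq_le_one n⟩
  · intro n; simp
  · have h : ∀ n : ℕ, 1 - 1/((n:ℝ)+1) ≤ ‖x₀‖ := by
      intro n
      have := coord1_le x₀ n
      rw [x₀_c1] at this
      calc 1 - 1/((n:ℝ)+1) = uSeq n := rfl
        _ ≤ |uSeq n| := le_abs_self _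
        _ ≤ ‖x₀‖ := this
    exact le_of_tendsto uSeq_tendsto (Filter.Eventually.of_forall h)

/-- The key inequality. -/
lemma keyB (f : Xsp →L[ℝ] ℝ) (hf : ‖f‖ ≤ 1) (hfx : f x₀ = 1)
    (h : Xsp) (p q : ℝ)
    (hp : Tendsto (⇑h.val.1) atTop (nhds p))
    (hq : Tendsto (⇑h.val.2.1) atTop (nhds q)) :
    f h ≤ max p (-q) := by
  set K := max p (-q) with hK
  have hpK : p ≤ K := le_max_left _ _
  have hqK : -q ≤ K := le_max_right _ _
  by_contra hcon
  push_neg at hcon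
  set ε := (f h - K)/2 with hε
  have hεpos : 0 < ε := by rw [hε]; linarith
  -- setup
  set R := max ‖h‖ 1 with hRdef
  have hR1 : (1:ℝ) ≤ R := le_max_right _ _
  have hR0 : (0:ℝ) < R := lt_of_lt_of_le one_pos hR1
  have hRh : ‖h‖ ≤ R := le_max_left _ _
  have hb1 : ∀ n, |h.val.1 n| ≤ R := fun n => (coord1_le h n).trans hRh
  have hb2 : ∀ n, |h.val.2.1 n| ≤ R := fun n => (coord2_le h n).trans hRh
  have hb3 : ∀ n, |h.val.2.2 n| ≤ R := fun n => (coord3_le h n).trans hRh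
  have hpR : |p| ≤ R := abs_lim_le hp hb1
  have hKlb : -R ≤ K := by
    have := (abs_le.mp hpR).1
    linarith
  -- choose N
  have hev : ∀ᶠ n in atTop, h.val.1 n < p + ε ∧ q - ε < h.val.2.1 n :=
    (hp.eventually_lt_const (by linarith)).and (hq.eventually_const_lt (by linarith))
  obtain ⟨N, hN⟩ := eventually_atTop.mp hev
  set δ := 1/((N:ℝ)+1) with hδdef
  have hδpos : 0 < δ := by positivity
  set s := min (δ/(2*R)) (1/(4*R)) with hsdef
  have hspos : 0 < s := lt_min (by positivity) (by positivity)
  have hs2R : 2*(s*R) ≤ δ := by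
    have h1 : s ≤ δ/(2*R) := min_le_left _ _
    have h2 := mul_le_mul_of_nonneg_right h1 (le_of_lt hR0)
    have h3 : δ/(2*R)*R = δ/2 := by field_simp
    rw [h3] at h2
    linarith
  have hsR : s * R ≤ 1/4 := by
    have h1 : s ≤ 1/(4*R) := min_le_right _ _
    have h2 := mul_le_mul_of_nonneg_right h1 (le_of_lt hR0)
    have h3 : 1/(4*R)*R = 1/4 := by field_simp
    rw [h3] at h2
    exact h2
  set C := 1 + s*(K+ε) with hCdef
  have hsKε : -(s*R) ≤ s*(K+ε) := by
    have := mul_le_mul_of_nonneg_left (by linarith : -R ≤ K+ε) (le_of_lt hspos)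
    calc -(s*R) = s * (-R) := by ring
      _ ≤ s*(K+ε) := this
  have hC34 : 3/4 ≤ C := by rw [hCdef]; linarith
  have hC0 : (0:ℝ) ≤ C := by linarith
  -- each coordinate of x₀ + s • h is bounded by C
  have hnorm : ‖x₀ + s • h‖ ≤ C := by
    refine norm_X_le _ C hC0 ?_ ?_ ?_
    · intro n
      rw [comb_c1, x₀_c1, abs_le]
      have habs := abs_le.mp (hb1 n)
      have hup : s * h.val.1 n ≤ s*R := mul_le_mul_of_nonneg_left habs.2 (le_of_lt hspos)
      have hlo : s * (-R) ≤ s * h.val.1 n := mul_le_mul_of_nonneg_left habs.1 (le_of_lt hspos)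
      have hlo' : -(s*R) ≤ s * h.val.1 n := by calc -(s*R) = s*(-R) := by ring
                                                  _ ≤ _ := hlo
      have h0 := uSeq_nonneg n
      have h1 := uSeq_le_one n
      constructor
      · linarith
      · rcases lt_or_ge n N with hn | hn
        · have hu := uSeq_head N n hn
          rw [hδdef] at hs2R
          linarith
        · have hlt := (hN n hn).1
          have h2 : s * h.val.1 n ≤ s*(p+ε) :=
            mul_le_mul_of_nonneg_left (le_of_lt hlt) (le_of_lt hspos)
          have h3 : s*(p+ε) ≤ s*(K+ε) :=
            mul_le_mul_of_nonneg_left (by linarith) (le_of_lt hspos)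
          rw [hCdef]; linarith
    · intro n
      rw [comb_c2, x₀_c2, abs_le]
      have habs := abs_le.mp (hb2 n)
      have hup : s * h.val.2.1 n ≤ s*R := mul_le_mul_of_nonneg_left habs.2 (le_of_lt hspos)
      have hlo : s * (-R) ≤ s * h.val.2.1 n := mul_le_mul_of_nonneg_left habs.1 (le_of_lt hspos)
      have hlo' : -(s*R) ≤ s * h.val.2.1 n := by calc -(s*R) = s*(-R) := by ring
                                                    _ ≤ _ := hlo
      have h0 := uSeq_nonneg n
      have h1 := uSeq_le_one n
      constructor
      · rcases lt_or_ge n N with hn | hn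
        · have hu := uSeq_head N n hn
          rw [hδdef] at hs2R
          linarith
        · have hlt := (hN n hn).2
          have h2 : s*(q-ε) ≤ s * h.val.2.1 n :=
            mul_le_mul_of_nonneg_left (le_of_lt hlt) (le_of_lt hspos)
          have h3 : s*(-(q-ε)) ≤ s*(K+ε) :=
            mul_le_mul_of_nonneg_left (by linarith) (le_of_lt hspos)
          have h4 : s*(-(q-ε)) = -(s*(q-ε)) := by ring
          rw [hCdef]; linarith
      · linarith
    · intro n
      rw [comb_c3, x₀_c3, abs_le]
      have habs := abs_le.mp (hb3 n)
      have hup : s * h.val.2.2 n ≤ s*R := mul_le_mul_of_nonneg_left habs.2 (le_of_lt hspos)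
      have hlo : s * (-R) ≤ s * h.val.2.2 n := mul_le_mul_of_nonneg_left habs.1 (le_of_lt hspos)
      have hlo' : -(s*R) ≤ s * h.val.2.2 n := by calc -(s*R) = s*(-R) := by ring
                                                    _ ≤ _ := hlo
      constructor
      · linarith
      · linarith
  -- conclude
  have heval : f (x₀ + s • h) = 1 + s * f h := by
    rw [map_add, map_smul, hfx, smul_eq_mul]
  have hle : f (x₀ + s • h) ≤ C := by
    calc f (x₀ + s • h) ≤ |f (x₀ + s • h)| := le_abs_self _
      _ ≤ ‖f‖ * ‖x₀ + s • h‖ := f.le_opNorm _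
      _ ≤ 1 * C := mul_le_mul hf hnorm (norm_nonneg _) one_pos.le
      _ = C := one_mul C
  rw [heval, hCdef] at hle
  have h5 : s * f h ≤ s * (K+ε) := by linarith
  have h6 : f h ≤ K + ε := (mul_le_mul_iff_right₀ hspos).mp h5
  rw [hε] at h6
  linarith
section hexlemma

private lemma hex_up (t₁ t₂ p q r m : ℝ) (hp : |p| ≤ r) (hq : |q| ≤ r)
    (hpq : |p + q| ≤ r) (h1 : |t₁| ≤ m) (h2 : |t₂| ≤ m) (h3 : |t₁ - t₂| ≤ m) :
    t₁ * p + t₂ * q ≤ m * r := by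
  have hr0 : 0 ≤ r := le_trans (abs_nonneg p) hp
  obtain ⟨hp1, hp2⟩ := abs_le.mp hp
  obtain ⟨hq1, hq2⟩ := abs_le.mp hq
  obtain ⟨hA1, hA2⟩ := abs_le.mp hpq
  obtain ⟨h11, h12⟩ := abs_le.mp h1
  obtain ⟨h21, h22⟩ := abs_le.mp h2
  obtain ⟨h31, h32⟩ := abs_le.mp h3
  rcases le_total 0 t₂ with ht2 | ht2 <;> rcases le_total 0 t₁ with ht1 | ht1 <;>
    rcases le_total t₂ t₁ with ht | ht
  -- 0 ≤ t₂, 0 ≤ t₁, t₂ ≤ t₁ : t₂(p+q) + (t₁-t₂)p ≤ t₂ r + (t₁-t₂) r = t₁ r ≤ m r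
  · nlinarith [mul_le_mul_of_nonneg_left hA2 ht2,
      mul_le_mul_of_nonneg_left hp2 (by linarith : (0:ℝ) ≤ t₁ - t₂),
      mul_le_mul_of_nonneg_right h12 hr0]
  -- 0 ≤ t₂, 0 ≤ t₁, t₁ ≤ t₂ : t₁(p+q) + (t₂-t₁)q ≤ t₂ r ≤ m r
  · nlinarith [mul_le_mul_of_nonneg_left hA2 ht1,
      mul_le_mul_of_nonneg_left hq2 (by linarith : (0:ℝ) ≤ t₂ - t₁),
      mul_le_mul_of_nonneg_right h22 hr0]
  -- 0 ≤ t₂, t₁ ≤ 0, t₂ ≤ t₁ : degenerate (t₂ ≤ t₁ ≤ 0 ≤ t₂ so all ~0) use c4 style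
  · nlinarith [mul_le_mul_of_nonpos_left hp1 ht1,
      mul_le_mul_of_nonneg_left hq2 ht2,
      mul_le_mul_of_nonneg_right (by linarith : t₂ - t₁ ≤ m) hr0]
  -- 0 ≤ t₂, t₁ ≤ 0 (t₁ ≤ t₂) : t₁ p + t₂ q ≤ -t₁ r + t₂ r = (t₂-t₁) r ≤ m r
  · nlinarith [mul_le_mul_of_nonpos_left hp1 ht1,
      mul_le_mul_of_nonneg_left hq2 ht2,
      mul_le_mul_of_nonneg_right (by linarith : t₂ - t₁ ≤ m) hr0]
  -- t₂ ≤ 0, 0 ≤ t₁, t₂ ≤ t₁ : t₁ p + t₂ q ≤ t₁ r + t₂ (-r) = (t₁-t₂) r ≤ m r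
  · nlinarith [mul_le_mul_of_nonneg_left hp2 ht1,
      mul_le_mul_of_nonpos_left hq1 ht2,
      mul_le_mul_of_nonneg_right h32 hr0]
  -- t₂ ≤ 0, 0 ≤ t₁, t₁ ≤ t₂ : degenerate
  · nlinarith [mul_le_mul_of_nonneg_left hp2 ht1,
      mul_le_mul_of_nonpos_left hq1 ht2,
      mul_le_mul_of_nonneg_right h32 hr0]
  -- here t₁ - t₂ ≥ 0 : t₂(p+q) ≤ -t₂ r, (t₁-t₂)p ≤ (t₁-t₂) r, total (t₁ - 2 t₂) r? no
  -- use c5: t₂(p+q) + (t₁-t₂)p ≤ (-t₂) r + (t₁-t₂) r = (t₁ - 2t₂) r ... wrong.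
  -- correct c5: A ≥ -r ⟹ t₂ A ≤ t₂ (-r) = -t₂ r ; p ≥ -r ⟹ (t₁-t₂) p ≤ ...
  -- (t₁-t₂) ≥ 0: (t₁-t₂)p ≤ (t₁-t₂)r. total: -t₂ r + (t₁-t₂) r = (t₁ - 2t₂) r. BAD.
  -- t₂ A ≤ -t₂ r needs A ≥ -r ✓ (t₂ ≤ 0, mul_le_mul_of_nonpos_left hA1 ht2 : t₂ A ≤ t₂ (-r))
  -- Correct math for c5 (t₁ ≤ t₂ ≤ 0) uses that decomposition; here t₂ ≤ t₁ ≤ 0: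
  -- use t₁ A + (t₂ - t₁) q: t₁ A ≤ -t₁ r, (t₂-t₁) ≤ 0: (t₂-t₁) q ≤ (t₂-t₁)(-r) = (t₁-t₂) r
  -- total (-t₁ + t₁ - t₂) r = -t₂ r ≤ m r ✓
  · nlinarith [mul_le_mul_of_nonpos_left hA1 ht1,
      mul_le_mul_of_nonpos_left hq1 (by linarith : t₂ - t₁ ≤ 0),
      mul_le_mul_of_nonneg_right (by linarith : -t₂ ≤ m) hr0]
  -- t₂ ≤ 0, t₁ ≤ 0, t₁ ≤ t₂ : t₂ A + (t₁ - t₂) p ≤ -t₂ r + (t₂ - t₁) r = -t₁ r ≤ m r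
  · nlinarith [mul_le_mul_of_nonpos_left hA1 ht2,
      mul_le_mul_of_nonpos_left hp1 (by linarith : t₁ - t₂ ≤ 0),
      mul_le_mul_of_nonneg_right (by linarith : -t₁ ≤ m) hr0]

lemma hex_abs (t₁ t₂ p q r m : ℝ) (hp : |p| ≤ r) (hq : |q| ≤ r)
    (hpq : |p + q| ≤ r) (h1 : |t₁| ≤ m) (h2 : |t₂| ≤ m) (h3 : |t₁ - t₂| ≤ m) :
    |t₁ * p + t₂ * q| ≤ m * r := by
  rw [abs_le]
  constructor
  · have := hex_up t₁ t₂ (-p) (-q) r m (by rwa [abs_neg]) (by rwa [abs_neg])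
      (by rw [show -p + -q = -(p+q) by ring, abs_neg]; exact hpq) h1 h2 h3
    nlinarith
  · exact hex_up t₁ t₂ p q r m hp hq hpq h1 h2 h3

end hexlemma

-- limits as functions
noncomputable def Xlim1 (w : Xsp) : ℝ := limUnder atTop (⇑w.val.1)
noncomputable def Xlim2 (w : Xsp) : ℝ := limUnder atTop (⇑w.val.2.1)
noncomputable def Xlim3 (w : Xsp) : ℝ := limUnder atTop (⇑w.val.2.2)

lemma tendsto_Xlim1 (w : Xsp) : Tendsto (⇑w.val.1) atTop (nhds (Xlim1 w)) := by
  obtain ⟨a, b, c, h1, h2, h3, hs⟩ := w.2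
  rw [Xlim1, h1.limUnder_eq]; exact h1

lemma tendsto_Xlim2 (w : Xsp) : Tendsto (⇑w.val.2.1) atTop (nhds (Xlim2 w)) := by
  obtain ⟨a, b, c, h1, h2, h3, hs⟩ := w.2
  rw [Xlim2, h2.limUnder_eq]; exact h2

lemma tendsto_Xlim3 (w : Xsp) : Tendsto (⇑w.val.2.2) atTop (nhds (Xlim3 w)) := by
  obtain ⟨a, b, c, h1, h2, h3, hs⟩ := w.2
  rw [Xlim3, h3.limUnder_eq]; exact h3

lemma Xlim1_eq {w : Xsp} {l : ℝ} (h : Tendsto (⇑w.val.1) atTop (nhds l)) : Xlim1 w = l :=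
  tendsto_nhds_unique (tendsto_Xlim1 w) h

lemma Xlim2_eq {w : Xsp} {l : ℝ} (h : Tendsto (⇑w.val.2.1) atTop (nhds l)) : Xlim2 w = l :=
  tendsto_nhds_unique (tendsto_Xlim2 w) h

lemma Xlim3_eq {w : Xsp} {l : ℝ} (h : Tendsto (⇑w.val.2.2) atTop (nhds l)) : Xlim3 w = l :=
  tendsto_nhds_unique (tendsto_Xlim3 w) h

lemma Xlim_sum (w : Xsp) : Xlim1 w + Xlim2 w + Xlim3 w = 0 := by
  obtain ⟨a, b, c, h1, h2, h3, hs⟩ := w.2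
  rw [Xlim1_eq h1, Xlim2_eq h2, Xlim3_eq h3]; exact hs

lemma abs_Xlim1_le (w : Xsp) : |Xlim1 w| ≤ ‖w‖ :=
  abs_lim_le (tendsto_Xlim1 w) (coord1_le w)

lemma abs_Xlim2_le (w : Xsp) : |Xlim2 w| ≤ ‖w‖ :=
  abs_lim_le (tendsto_Xlim2 w) (coord2_le w)

lemma abs_Xlim3_le (w : Xsp) : |Xlim3 w| ≤ ‖w‖ :=
  abs_lim_le (tendsto_Xlim3 w) (coord3_le w)

lemma abs_Xlim12_le (w : Xsp) : |Xlim1 w + Xlim2 w| ≤ ‖w‖ := by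
  have h := Xlim_sum w
  have : Xlim1 w + Xlim2 w = -Xlim3 w := by linarith
  rw [this, abs_neg]
  exact abs_Xlim3_le w

lemma tendsto_comb1 (a b : Xsp) (s : ℝ) {la lb : ℝ}
    (ha : Tendsto (⇑a.val.1) atTop (nhds la)) (hb : Tendsto (⇑b.val.1) atTop (nhds lb)) :
    Tendsto (⇑((a + s • b) : Xsp).val.1) atTop (nhds (la + s * lb)) := by
  have : ⇑((a + s • b) : Xsp).val.1 = fun n => a.val.1 n + s * b.val.1 n := by
    funext n; exact comb_c1 a b s n
  rw [this]
  exact ha.add (hb.const_mul s)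

lemma tendsto_comb2 (a b : Xsp) (s : ℝ) {la lb : ℝ}
    (ha : Tendsto (⇑a.val.2.1) atTop (nhds la)) (hb : Tendsto (⇑b.val.2.1) atTop (nhds lb)) :
    Tendsto (⇑((a + s • b) : Xsp).val.2.1) atTop (nhds (la + s * lb)) := by
  have : ⇑((a + s • b) : Xsp).val.2.1 = fun n => a.val.2.1 n + s * b.val.2.1 n := by
    funext n; exact comb_c2 a b s n
  rw [this]
  exact ha.add (hb.const_mul s)

lemma zero_c1_tendsto : Tendsto (⇑((0 : Xsp)).val.1) atTop (nhds (0:ℝ)) := by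
  rw [show ((0 : Xsp)).val.1 = (0 : lp (fun _ : ℕ => ℝ) ∞) from rfl, lp.coeFn_zero]
  exact tendsto_const_nhds

lemma zero_c2_tendsto : Tendsto (⇑((0 : Xsp)).val.2.1) atTop (nhds (0:ℝ)) := by
  rw [show ((0 : Xsp)).val.2.1 = (0 : lp (fun _ : ℕ => ℝ) ∞) from rfl, lp.coeFn_zero]
  exact tendsto_const_nhds

lemma eX_c1_tendsto : Tendsto (⇑(eX.val.1)) atTop (nhds (1:ℝ)) := constSeq_tendsto 1

lemma eX_c2_tendsto : Tendsto (⇑(eX.val.2.1)) atTop (nhds (0:ℝ)) := by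
  rw [show (eX).val.2.1 = (0 : lp (fun _ : ℕ => ℝ) ∞) from rfl, lp.coeFn_zero]
  exact tendsto_const_nhds

-- the two limit functionals as continuous linear maps
noncomputable def L1 : Xsp →L[ℝ] ℝ :=
  LinearMap.mkContinuous
    { toFun := Xlim1
      map_add' := fun v w => by
        refine Xlim1_eq ?_
        have h := tendsto_comb1 v w 1 (tendsto_Xlim1 v) (tendsto_Xlim1 w)
        rw [one_smul] at h
        simpa using h
      map_smul' := fun s w => by
        refine Xlim1_eq ?_
        have h := tendsto_comb1 0 w s zero_c1_tendsto (tendsto_Xlim1 w)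
        rw [zero_add] at h
        simpa using h }
    1 (fun w => by rw [Real.norm_eq_abs, one_mul]; exact abs_Xlim1_le w)

noncomputable def L2 : Xsp →L[ℝ] ℝ :=
  LinearMap.mkContinuous
    { toFun := Xlim2
      map_add' := fun v w => by
        refine Xlim2_eq ?_
        have h := tendsto_comb2 v w 1 (tendsto_Xlim2 v) (tendsto_Xlim2 w)
        rw [one_smul] at h
        simpa using h
      map_smul' := fun s w => by
        refine Xlim2_eq ?_
        have h := tendsto_comb2 0 w s zero_c2_tendsto (tendsto_Xlim2 w)
        rw [zero_add] at h
        simpa using h }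
    1 (fun w => by rw [Real.norm_eq_abs, one_mul]; exact abs_Xlim2_le w)

@[simp] lemma L1_apply (w : Xsp) : L1 w = Xlim1 w := rfl
@[simp] lemma L2_apply (w : Xsp) : L2 w = Xlim2 w := rfl

-- limits of basic elements
lemma Xlim1_eX : Xlim1 eX = 1 := Xlim1_eq (constSeq_tendsto 1)
lemma Xlim2_eX : Xlim2 eX = 0 := Xlim2_eq (by
  rw [show (eX).val.2.1 = (0 : lp (fun _ : ℕ => ℝ) ∞) from rfl, lp.coeFn_zero]
  exact tendsto_const_nhds)
lemma Xlim1_wit2 : Xlim1 wit2 = 0 := Xlim1_eq (by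
  rw [show (wit2).val.1 = (0 : lp (fun _ : ℕ => ℝ) ∞) from rfl, lp.coeFn_zero]
  exact tendsto_const_nhds)
lemma Xlim2_wit2 : Xlim2 wit2 = 1 := Xlim2_eq (constSeq_tendsto 1)

lemma norm_eX_le : ‖eX‖ ≤ 1 := by
  refine norm_X_le eX 1 one_pos.le ?_ ?_ ?_ <;> intro n
  · show |constS 1 n| ≤ 1
    simp
  · show |(0 : lp (fun _ : ℕ => ℝ) ∞) n| ≤ 1
    rw [lp.coeFn_zero]; simp
  · show |constS (-1) n| ≤ 1
    simp

lemma norm_wit2_le : ‖wit2‖ ≤ 1 := by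
  refine norm_X_le wit2 1 one_pos.le ?_ ?_ ?_ <;> intro n
  · show |(0 : lp (fun _ : ℕ => ℝ) ∞) n| ≤ 1
    rw [lp.coeFn_zero]; simp
  · show |constS 1 n| ≤ 1
    simp
  · show |constS (-1) n| ≤ 1
    simp

-- the exact form of a norming functional of x₀
lemma form_upper (f : Xsp →L[ℝ] ℝ) (hf : ‖f‖ ≤ 1) (hfx : f x₀ = 1) (v : Xsp) :
    f v ≤ (f eX) * Xlim1 v + (f eX - 1) * Xlim2 v := by
  set lx := Xlim1 v
  set ly := Xlim2 v
  set μ := lx + ly with hμ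
  set h : Xsp := v + (-μ) • eX with hh
  have hl1 : Tendsto (⇑h.val.1) atTop (nhds (-ly)) := by
    have := tendsto_comb1 v eX (-μ) (tendsto_Xlim1 v) eX_c1_tendsto
    rw [hh]
    convert this using 2
    rw [hμ]; ring
  have hl2 : Tendsto (⇑h.val.2.1) atTop (nhds ly) := by
    have := tendsto_comb2 v eX (-μ) (tendsto_Xlim2 v) eX_c2_tendsto
    rw [hh]
    convert this using 2
    ring
  have hkey := keyB f hf hfx h (-ly) ly hl1 hl2
  rw [max_self] at hkey
  have heval : f h = f v - μ * f eX := by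
    rw [hh, map_add, map_smul, smul_eq_mul]; ring
  rw [heval] at hkey
  have : μ * f eX = (lx + ly) * f eX := by rw [hμ]
  nlinarith [hkey]

lemma form_eq (f : Xsp →L[ℝ] ℝ) (hf : ‖f‖ ≤ 1) (hfx : f x₀ = 1) (v : Xsp) :
    f v = (f eX) * Xlim1 v + (f eX - 1) * Xlim2 v := by
  have h1 := form_upper f hf hfx v
  have h2 := form_upper f hf hfx (-v)
  have hneg1 : Xlim1 (-v) = -Xlim1 v := Xlim1_eq (by
    have : ⇑(-v : Xsp).val.1 = fun n => -(v.val.1 n) := by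
      funext n
      show ((-v : Xsp)).val.1 n = _
      have : ((-v : Xsp)).val.1 = -(v.val.1) := rfl
      rw [this, lp.coeFn_neg]; rfl
    rw [this]
    exact (tendsto_Xlim1 v).neg)
  have hneg2 : Xlim2 (-v) = -Xlim2 v := Xlim2_eq (by
    have : ⇑(-v : Xsp).val.2.1 = fun n => -(v.val.2.1 n) := by
      funext n
      have : ((-v : Xsp)).val.2.1 = -(v.val.2.1) := rfl
      rw [this, lp.coeFn_neg]; rfl
    rw [this]
    exact (tendsto_Xlim2 v).neg)
  rw [map_neg, hneg1, hneg2] at h2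
  linarith

lemma a_mem (f : Xsp →L[ℝ] ℝ) (hf : ‖f‖ ≤ 1) (hfx : f x₀ = 1) :
    0 ≤ f eX ∧ f eX ≤ 1 := by
  constructor
  · -- f (x₀ + (-1) • eX) = 1 - f eX ≤ ‖x₀ - eX‖ ≤ 1
    have hnorm : ‖x₀ + (-1 : ℝ) • eX‖ ≤ 1 := by
      refine norm_X_le _ 1 one_pos.le ?_ ?_ ?_ <;> intro n
      · rw [comb_c1, x₀_c1]
        have h1 := uSeq_nonneg n
        have h2 := uSeq_le_one n
        have : eX.val.1 n = 1 := rfl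
        rw [this, abs_le]; constructor <;> nlinarith
      · rw [comb_c2, x₀_c2]
        have h1 := uSeq_nonneg n
        have h2 := uSeq_le_one n
        have : eX.val.2.1 n = 0 := by
          show (0 : lp (fun _ : ℕ => ℝ) ∞) n = 0
          rw [lp.coeFn_zero]; rfl
        rw [this, abs_le]; constructor <;> nlinarith
      · rw [comb_c3, x₀_c3]
        have : eX.val.2.2 n = -1 := rfl
        rw [this]; norm_num
    have heval : f (x₀ + (-1 : ℝ) • eX) = 1 - f eX := by
      rw [map_add, map_smul, hfx, smul_eq_mul]; ring
    have := le_trans (le_abs_self _) (f.le_opNorm (x₀ + (-1 : ℝ) • eX))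
    have hle : f (x₀ + (-1 : ℝ) • eX) ≤ 1 := by
      calc f (x₀ + (-1 : ℝ) • eX) ≤ ‖f‖ * ‖x₀ + (-1 : ℝ) • eX‖ := this
        _ ≤ 1 * 1 := mul_le_mul hf hnorm (norm_nonneg _) one_pos.le
        _ = 1 := one_mul 1
    rw [heval] at hle; linarith
  · have hnorm : ‖x₀ + (1 : ℝ) • eX‖ ≤ 2 := by
      refine norm_X_le _ 2 (by norm_num) ?_ ?_ ?_ <;> intro n
      · rw [comb_c1, x₀_c1]
        have h1 := uSeq_nonneg n
        have h2 := uSeq_le_one n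
        have : eX.val.1 n = 1 := rfl
        rw [this, abs_le]; constructor <;> nlinarith
      · rw [comb_c2, x₀_c2]
        have h1 := uSeq_nonneg n
        have h2 := uSeq_le_one n
        have : eX.val.2.1 n = 0 := by
          show (0 : lp (fun _ : ℕ => ℝ) ∞) n = 0
          rw [lp.coeFn_zero]; rfl
        rw [this, abs_le]; constructor <;> nlinarith
      · rw [comb_c3, x₀_c3]
        have : eX.val.2.2 n = -1 := rfl
        rw [this]; norm_num
    have heval : f (x₀ + (1 : ℝ) • eX) = 1 + f eX := by
      rw [map_add, map_smul, hfx, smul_eq_mul]; ring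
    have := le_trans (le_abs_self _) (f.le_opNorm (x₀ + (1 : ℝ) • eX))
    have hle : f (x₀ + (1 : ℝ) • eX) ≤ 2 := by
      calc f (x₀ + (1 : ℝ) • eX) ≤ ‖f‖ * ‖x₀ + (1 : ℝ) • eX‖ := this
        _ ≤ 1 * 2 := mul_le_mul hf hnorm (norm_nonneg _) one_pos.le
        _ = 2 := by norm_num
    rw [heval] at hle; linarith


section bauer

variable {E : Type*} [NormedAddCommGroup E] [NormedSpace ℝ E]

noncomputable instance : LocallyConvexSpace ℝ (WeakDual ℝ E) :=
  inferInstanceAs (LocallyConvexSpace ℝ (WeakBilin (topDualPairing ℝ E)))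

theorem bauer_max (g : E) :
    ∃ F ∈ (Metric.closedBall (0 : StrongDual ℝ E) 1).extremePoints ℝ,
      ∀ G ∈ Metric.closedBall (0 : StrongDual ℝ E) 1, G g ≤ F g := by
  classical
  set B : Set (WeakDual ℝ E) := WeakDual.toStrongDual ⁻¹' (closedBall 0 1) with hBdef
  have hcomp : IsCompact B := WeakDual.isCompact_closedBall 0 1
  have h0B : (0 : WeakDual ℝ E) ∈ B := by simp [hBdef]
  let l : WeakDual ℝ E →L[ℝ] ℝ :=
    { toFun := fun G => G g
      map_add' := fun x y => rfl
      map_smul' := fun c x => rfl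
      cont := WeakDual.eval_continuous g }
  obtain ⟨G₀, hG₀B, hmax⟩ := hcomp.exists_isMaxOn ⟨0, h0B⟩ l.continuous.continuousOn
  set S : Set (WeakDual ℝ E) := {G ∈ B | ∀ H ∈ B, l H ≤ l G} with hSdef
  have hG₀S : G₀ ∈ S := ⟨hG₀B, fun H hH => hmax hH⟩
  have hexpo : IsExposed ℝ B S := fun _ => ⟨l, rfl⟩
  have hSex : IsExtreme ℝ B S := hexpo.isExtreme
  have hBclosed : IsClosed B := hcomp.isClosed
  have hSclosed : IsClosed S := hexpo.isClosed hBclosed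
  have hScomp : IsCompact S := hcomp.of_isClosed_subset hSclosed (Set.sep_subset _ _)
  obtain ⟨F, hF⟩ := hScomp.extremePoints_nonempty ⟨G₀, hG₀S⟩
  have hFB : F ∈ B.extremePoints ℝ := hSex.extremePoints_subset_extremePoints hF
  refine ⟨WeakDual.toStrongDual F, ?_, ?_⟩
  · exact hFB
  · intro G hG
    exact hF.1.2 (StrongDual.toWeakDual G) hG

end bauer


end AuxiliaryDefs

/-- For `X = {(x,y,z) ∈ c ⊕_∞ c ⊕_∞ c : lim x + lim y + lim z = 0}`: for every boundary
`C ⊆ S_{X*}` of `B_{X*}` there are `x* ∈ C` and an extreme point `x**` of `B_{X**}` with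
`|x**(x*)| < 1`. -/
theorem exists_extremePoint_abs_lt_one_of_boundary (C : Set XDual)
    (hC_sphere : ∀ f ∈ C, ‖f‖ = 1)
    (hC_boundary : ∀ x : ↥limSumZeroSubspace, ∃ f ∈ C, XDual.toFunctional f x = ‖x‖) :
    ∃ f ∈ C, ∃ F : StrongDual ℝ XDual,
      F ∈ Set.extremePoints ℝ (Metric.closedBall (0 : StrongDual ℝ XDual) 1) ∧
      |F f| < 1 := by
  obtain ⟨f, hfC, hfx⟩ := hC_boundary x₀
  have hfnorm : ‖f‖ = 1 := hC_sphere f hfC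
  refine ⟨f, hfC, ?_⟩
  set φ : Xsp →L[ℝ] ℝ := XDual.toFunctional f with hφ
  have hφnorm : ‖φ‖ ≤ 1 := le_of_eq hfnorm
  have hφx₀ : φ x₀ = 1 := by
    rw [norm_x₀] at hfx; exact hfx
  set a := φ eX with ha
  obtain ⟨ha0, ha1⟩ := a_mem φ hφnorm hφx₀
  set Q := max (1 - a/2) ((1+a)/2) with hQ
  have hQ1 : 1 - a/2 ≤ Q := le_max_left _ _
  have hQ2 : (1+a)/2 ≤ Q := le_max_right _ _
  have hQ34 : 3/4 ≤ Q := by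
    rcases le_total a (1/2) with h | h
    · calc (3:ℝ)/4 ≤ 1 - a/2 := by linarith
        _ ≤ Q := hQ1
    · calc (3:ℝ)/4 ≤ (1+a)/2 := by linarith
        _ ≤ Q := hQ2
  set gg : Xsp →L[ℝ] ℝ := (1 - a/2) • L1 + ((1+a)/2) • L2 with hgg
  have hgg_apply : ∀ w : Xsp, gg w = (1-a/2) * Xlim1 w + ((1+a)/2) * Xlim2 w := by
    intro w
    rw [hgg]
    simp [ContinuousLinearMap.add_apply, ContinuousLinearMap.smul_apply, smul_eq_mul]
  have hform := form_eq φ hφnorm hφx₀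
  -- operator norm bounds
  have hsum : ‖φ + gg‖ ≤ Q + 1/2 := by
    refine ContinuousLinearMap.opNorm_le_bound _ (by linarith) fun w => ?_
    rw [ContinuousLinearMap.add_apply, hform w, hgg_apply w, Real.norm_eq_abs]
    have hre : a * Xlim1 w + (a - 1) * Xlim2 w + ((1-a/2) * Xlim1 w + ((1+a)/2) * Xlim2 w)
        = (1 + a/2) * Xlim1 w + ((3*a-1)/2) * Xlim2 w := by ring
    rw [hre]
    refine hex_abs _ _ _ _ _ _ (abs_Xlim1_le w) (abs_Xlim2_le w) (abs_Xlim12_le w) ?_ ?_ ?_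
    · rw [abs_le]; constructor <;> linarith
    · rw [abs_le]; constructor <;> linarith
    · rw [abs_le]; constructor <;> linarith
  have hdiff : ‖gg - φ‖ ≤ Q + 1/2 := by
    refine ContinuousLinearMap.opNorm_le_bound _ (by linarith) fun w => ?_
    rw [ContinuousLinearMap.sub_apply, hform w, hgg_apply w, Real.norm_eq_abs]
    have hre : (1-a/2) * Xlim1 w + ((1+a)/2) * Xlim2 w - (a * Xlim1 w + (a - 1) * Xlim2 w)
        = (1 - 3*a/2) * Xlim1 w + ((3-a)/2) * Xlim2 w := by ring
    rw [hre]
    refine hex_abs _ _ _ _ _ _ (abs_Xlim1_le w) (abs_Xlim2_le w) (abs_Xlim12_le w) ?_ ?_ ?_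
    · rw [abs_le]; constructor <;> linarith
    · rw [abs_le]; constructor <;> linarith
    · rw [abs_le]; constructor <;> linarith
  -- Bauer maximum principle applied to gg
  set gXD : XDual := gg with hgXD
  obtain ⟨F, hFext, hFmax⟩ := bauer_max (E := XDual) gXD
  have hFball : F ∈ Metric.closedBall (0 : StrongDual ℝ XDual) 1 :=
    extremePoints_subset hFext
  have hFnorm : ‖F‖ ≤ 1 := by rwa [Metric.mem_closedBall, dist_zero_right] at hFball
  refine ⟨F, hFext, ?_⟩
  -- witnesses for the value of F at gXD
  have hJmem : ∀ w : Xsp, ‖w‖ ≤ 1 →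
      (NormedSpace.inclusionInDoubleDual ℝ Xsp w : StrongDual ℝ XDual) ∈
        Metric.closedBall (0 : StrongDual ℝ XDual) 1 := by
    intro w hw
    show dist (NormedSpace.inclusionInDoubleDual ℝ Xsp w) (0 : StrongDual ℝ (StrongDual ℝ Xsp)) ≤ 1
    refine (dist_zero_right (NormedSpace.inclusionInDoubleDual ℝ Xsp w)).trans_le ?_
    exact (NormedSpace.double_dual_bound ℝ Xsp w).trans hw
  have hQF : Q ≤ F gXD := by
    have hv1 : gg eX = 1 - a/2 := by
      rw [hgg_apply, Xlim1_eX, Xlim2_eX]; ring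
    have hv2 : gg wit2 = (1+a)/2 := by
      rw [hgg_apply, Xlim1_wit2, Xlim2_wit2]; ring
    have hF1 : gg eX ≤ F gXD := hFmax _ (hJmem eX norm_eX_le)
    have hF2 : gg wit2 ≤ F gXD := hFmax _ (hJmem wit2 norm_wit2_le)
    rw [hv1] at hF1
    rw [hv2] at hF2
    exact max_le hF1 hF2
  -- conclude
  have hfg : (f + gXD : XDual) = (φ + gg : Xsp →L[ℝ] ℝ) := rfl
  have hgf : (gXD - f : XDual) = (gg - φ : Xsp →L[ℝ] ℝ) := rfl
  have hup : F f ≤ 1/2 := by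
    have hFadd : F (f + gXD) = F f + F gXD := F.map_add f gXD
    have hb : F (f + gXD) ≤ Q + 1/2 := by
      calc F (f + gXD) ≤ |F (f + gXD)| := le_abs_self _
        _ ≤ ‖F‖ * ‖f + gXD‖ := F.le_opNorm _
        _ ≤ 1 * (Q + 1/2) := by
            refine mul_le_mul hFnorm ?_ (norm_nonneg _) (by norm_num)
            rw [show ‖(f + gXD : XDual)‖ = ‖(φ + gg : Xsp →L[ℝ] ℝ)‖ from congrArg _ hfg]
            exact hsum
        _ = Q + 1/2 := one_mul _
    rw [hFadd] at hb
    linarith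
  have hlo : -(1/2) ≤ F f := by
    have hFsub : F (gXD - f) = F gXD - F f := F.map_sub gXD f
    have hb : F (gXD - f) ≤ Q + 1/2 := by
      calc F (gXD - f) ≤ |F (gXD - f)| := le_abs_self _
        _ ≤ ‖F‖ * ‖gXD - f‖ := F.le_opNorm _
        _ ≤ 1 * (Q + 1/2) := by
            refine mul_le_mul hFnorm ?_ (norm_nonneg _) (by norm_num)
            rw [show ‖(gXD - f : XDual)‖ = ‖(gg - φ : Xsp →L[ℝ] ℝ)‖ from congrArg _ hgf]
            exact hdiff
        _ = Q + 1/2 := one_mul _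
    rw [hFsub] at hb
    linarith
  have : |F f| ≤ 1/2 := abs_le.mpr ⟨hlo, hup⟩
  linarith
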